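/- The posterior variance sequence is monotonically non-increasing: for every n ≥ 0 and every x ∈ D, σ_{n+1}²(x) ≤ σ_n²(x). -/

import Mathlib

open Matrix

/-- The `n × n` kernel matrix `K_n = [κ(x_i, x_j)]` built from the first `n`
points of the sequence `xs` (zero-indexed: `xs 0 = x_1`). -/
noncomputable def kerMat {D : Type*} (κ : D → D → ℝ) (xs : ℕ → D) (n : ℕ) :
    Matrix (Fin n) (Fin n) ℝ :=
  Matrix.of fun i j => κ (xs i) (xs j)

/-- The kernel vector `k_n(x) = [κ(x_i, x)]_{i=1}^n`. -/
noncomputable def kerVec {D : Type*} (κ : D → D → ℝ) (xs : ℕ → D) (n : ℕ) (y : D) :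
    Fin n → ℝ :=
  fun i => κ (xs i) y

/-- The posterior variance
`σ_n²(x) = κ(x,x) − k_n(x)ᵀ (K_n + σ² I_n)⁻¹ k_n(x)`;
for `n = 0` this is `κ(x,x)`. -/
noncomputable def postVar {D : Type*} (κ : D → D → ℝ) (xs : ℕ → D) (σ2 : ℝ)
    (n : ℕ) (y : D) : ℝ :=
  κ y y -
    kerVec κ xs n y ⬝ᵥ
      ((kerMat κ xs n + σ2 • (1 : Matrix (Fin n) (Fin n) ℝ))⁻¹ *ᵥ kerVec κ xs n y)



lemma quad_le_inv {n : ℕ} {M : Matrix (Fin n) (Fin n) ℝ} (hM : M.PosDef)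
    (k w : Fin n → ℝ) :
    2 * (w ⬝ᵥ k) - w ⬝ᵥ (M *ᵥ w) ≤ k ⬝ᵥ (M⁻¹ *ᵥ k) := by
  have hinv : M * M⁻¹ = 1 := Matrix.mul_nonsing_inv _ (isUnit_iff_isUnit_det _ |>.1 hM.isUnit)
  have hMu : M *ᵥ (M⁻¹ *ᵥ k) = k := by rw [mulVec_mulVec, hinv, one_mulVec]
  have hpsd := hM.posSemidef.dotProduct_mulVec_nonneg (M⁻¹ *ᵥ k - w)
  simp only [star_trivial] at hpsd
  have hsym : ∀ a b : Fin n → ℝ, a ⬝ᵥ (M *ᵥ b) = b ⬝ᵥ (M *ᵥ a) := by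
    intro a b
    rw [dotProduct_mulVec, ← mulVec_transpose, dotProduct_comm]
    congr 1
    have := hM.isHermitian
    rw [Matrix.IsHermitian, conjTranspose_eq_transpose_of_trivial] at this
    rw [this]
  have hexp : (M⁻¹ *ᵥ k - w) ⬝ᵥ (M *ᵥ (M⁻¹ *ᵥ k - w))
      = k ⬝ᵥ (M⁻¹ *ᵥ k) - 2 * (w ⬝ᵥ k) + w ⬝ᵥ (M *ᵥ w) := by
    rw [mulVec_sub, hMu, sub_dotProduct, dotProduct_sub, dotProduct_sub]
    have h1 : (M⁻¹ *ᵥ k) ⬝ᵥ k = k ⬝ᵥ (M⁻¹ *ᵥ k) := dotProduct_comm _ _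
    have h2 : (M⁻¹ *ᵥ k) ⬝ᵥ (M *ᵥ w) = w ⬝ᵥ k := by
      rw [hsym, hMu]
    rw [h1, h2]
    ring
  rw [hexp] at hpsd
  linarith

lemma regMat_posDef {D : Type*} (κ : D → D → ℝ)
    (hpsd : ∀ (n : ℕ) (z : Fin n → D),
      (Matrix.of fun i j => κ (z i) (z j)).PosSemidef)
    (σ2 : ℝ) (hσ2 : 0 < σ2) (xs : ℕ → D) (n : ℕ) :
    (kerMat κ xs n + σ2 • (1 : Matrix (Fin n) (Fin n) ℝ)).PosDef := by
  refine Matrix.PosDef.posSemidef_add (hpsd n (fun i => xs i)) ?_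
  rw [smul_one_eq_diagonal]
  exact Matrix.PosDef.diagonal (fun _ => hσ2)


/-- The posterior variance sequence is monotonically non-increasing:
for every `n ≥ 0` and every `x ∈ D`, `σ_{n+1}²(x) ≤ σ_n²(x)`. -/
theorem posterior_variance_antitone {D : Type*} [Nonempty D]
    (κ : D → D → ℝ)
    (hsymm : ∀ a b : D, κ a b = κ b a)
    (hpsd : ∀ (n : ℕ) (z : Fin n → D),
      (Matrix.of fun i j => κ (z i) (z j)).PosSemidef)
    (σ2 : ℝ) (hσ2 : 0 < σ2)
    (xs : ℕ → D) (n : ℕ) (y : D) :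
    postVar κ xs σ2 (n + 1) y ≤ postVar κ xs σ2 n y := by
  have hMn := regMat_posDef κ hpsd σ2 hσ2 xs n
  have hMn1 := regMat_posDef κ hpsd σ2 hσ2 xs (n + 1)
  set Mn := kerMat κ xs n + σ2 • (1 : Matrix (Fin n) (Fin n) ℝ) with hMndef
  set Mn1 := kerMat κ xs (n+1) + σ2 • (1 : Matrix (Fin (n+1)) (Fin (n+1)) ℝ) with hMn1def
  set kn := kerVec κ xs n y with hkndef
  set kn1 := kerVec κ xs (n+1) y with hkn1def
  set wn : Fin n → ℝ := Mn⁻¹ *ᵥ kn with hwndef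
  set w : Fin (n+1) → ℝ := Fin.snoc wn 0 with hwdef
  have hinv : Mn * Mn⁻¹ = 1 :=
    Matrix.mul_nonsing_inv _ (isUnit_iff_isUnit_det _ |>.1 hMn.isUnit)
  have hMw : Mn *ᵥ wn = kn := by rw [hwndef, mulVec_mulVec, hinv, one_mulVec]
  have hk_cast : ∀ i : Fin n, kn1 i.castSucc = kn i := by
    intro i; simp [hkn1def, hkndef, kerVec, Fin.coe_castSucc]
  have hM_cast : ∀ i j : Fin n, Mn1 i.castSucc j.castSucc = Mn i j := by
    intro i j
    simp only [hMn1def, hMndef, Matrix.add_apply, Matrix.smul_apply, Matrix.one_apply,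
      kerMat, Matrix.of_apply, Fin.coe_castSucc]
    congr 1
    by_cases h : i = j
    · simp [h]
    · rw [if_neg (by simpa using h), if_neg h]
  have hw_k : w ⬝ᵥ kn1 = wn ⬝ᵥ kn := by
    rw [dotProduct, dotProduct, Fin.sum_univ_castSucc]
    simp only [hwdef, Fin.snoc_castSucc, Fin.snoc_last, zero_mul, add_zero]
    exact Finset.sum_congr rfl fun i _ => by rw [hk_cast]
  have hw_Mw : w ⬝ᵥ (Mn1 *ᵥ w) = wn ⬝ᵥ (Mn *ᵥ wn) := by
    rw [dotProduct, Fin.sum_univ_castSucc]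
    simp only [hwdef, Fin.snoc_castSucc, Fin.snoc_last, zero_mul, add_zero]
    rw [dotProduct]
    refine Finset.sum_congr rfl fun i _ => ?_
    congr 1
    rw [mulVec, dotProduct, mulVec, dotProduct, Fin.sum_univ_castSucc]
    simp only [Fin.snoc_castSucc, Fin.snoc_last, mul_zero, add_zero]
    exact Finset.sum_congr rfl fun j _ => by rw [hM_cast]
  have key := quad_le_inv hMn1 kn1 w
  rw [hw_k, hw_Mw, hMw] at key
  have hval : 2 * (wn ⬝ᵥ kn) - wn ⬝ᵥ kn = kn ⬝ᵥ (Mn⁻¹ *ᵥ kn) := by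
    have : wn ⬝ᵥ kn = kn ⬝ᵥ (Mn⁻¹ *ᵥ kn) := by rw [hwndef, dotProduct_comm]
    linarith
  rw [hval] at key
  simp only [postVar]
  rw [← hMndef, ← hMn1def, ← hkndef, ← hkn1def]
  linarith
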